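/- For every odd prime power q ≥ 79, the graphs G_0 = S_{q−1}(8,16; 1,−1,5,−13) and G_1 = S_{q−1}(2,4; 3,−7,15,−21) on Z_{q−1} are both 6-regular of girth at least 5. -/

import Mathlib

/-- The graph `S_n(k_1,…,k_w)` on `ZMod n`: edges join an even-labeled vertex `a`
to `a + k` for each `k ∈ K`. -/
def SGraph (n : ℕ) (K : Set (ZMod n)) : SimpleGraph (ZMod n) where
  Adj a b := a ≠ b ∧ ((Even a.val ∧ b - a ∈ K) ∨ (Even b.val ∧ a - b ∈ K))
  symm := ⟨by
    rintro a b ⟨h1, h2⟩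
    exact ⟨h1.symm, h2.symm⟩⟩
  loopless := ⟨fun a h => h.1 rfl⟩

/-- The graph `S_n(P,Q; k_1,…,k_w)` on `ZMod n`: the graph `S_n(k_1,…,k_w)` together with
the edges `{2v, 2v+P}` on even vertices and `{2v+1, 2v+1+Q}` on odd vertices. -/
def SPQGraph (n : ℕ) (P Q : ZMod n) (K : Set (ZMod n)) : SimpleGraph (ZMod n) where
  Adj a b := a ≠ b ∧ (((Even a.val ∧ b - a ∈ K) ∨ (Even b.val ∧ a - b ∈ K))
    ∨ (Even a.val ∧ Even b.val ∧ (b - a = P ∨ a - b = P))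
    ∨ (Odd a.val ∧ Odd b.val ∧ (b - a = Q ∨ a - b = Q)))
  symm := ⟨by
    rintro a b ⟨h1, h2⟩
    refine ⟨h1.symm, ?_⟩
    rcases h2 with h | ⟨ha, hb, h⟩ | ⟨ha, hb, h⟩
    · exact Or.inl h.symm
    · exact Or.inr (Or.inl ⟨hb, ha, h.symm⟩)
    · exact Or.inr (Or.inr ⟨hb, ha, h.symm⟩)⟩
  loopless := ⟨fun a h => h.1 rfl⟩

/-- The infinite analogue `S_∞(P,Q; k_1,…,k_w)` on `ℤ`. -/
def SPQGraphZ (P Q : ℤ) (K : Set ℤ) : SimpleGraph ℤ where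
  Adj a b := a ≠ b ∧ (((Even a ∧ b - a ∈ K) ∨ (Even b ∧ a - b ∈ K))
    ∨ (Even a ∧ Even b ∧ (b - a = P ∨ a - b = P))
    ∨ (Odd a ∧ Odd b ∧ (b - a = Q ∨ a - b = Q)))
  symm := ⟨by
    rintro a b ⟨h1, h2⟩
    refine ⟨h1.symm, ?_⟩
    rcases h2 with h | ⟨ha, hb, h⟩ | ⟨ha, hb, h⟩
    · exact Or.inl h.symm
    · exact Or.inr (Or.inl ⟨hb, ha, h.symm⟩)
    · exact Or.inr (Or.inr ⟨hb, ha, h.symm⟩)⟩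
  loopless := ⟨fun a h => h.1 rfl⟩

/-- The Cayley colors of a graph on `ZMod n`: differences of adjacent vertices. -/
def cayleyColors {n : ℕ} (G : SimpleGraph (ZMod n)) : Set (ZMod n) :=
  {c | ∃ a b, G.Adj a b ∧ c = a - b}


/-! ### Auxiliary lemmas -/

theorem par_odd {n : ℕ} [NeZero n] (hn2 : 2 ∣ n) (a : ZMod n) (d : ℤ) (hd : Odd d) :
    (a + (d : ZMod n)).val % 2 ≠ a.val % 2 := by
  have key : ∀ x : ZMod n, x.val % 2 = ((ZMod.castHom hn2 (ZMod 2)) x).val := by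
    intro x
    rw [ZMod.castHom_apply, ← ZMod.natCast_val, ZMod.val_natCast]
  rw [key, key, map_add, map_intCast]
  obtain ⟨k, hk⟩ := hd
  have h1 : ((d : ℤ) : ZMod 2) = 1 := by
    rw [hk]; push_cast; rw [show (2 : ZMod 2) = 0 from rfl]; ring
  rw [h1]
  generalize (ZMod.castHom hn2 (ZMod 2)) a = x
  revert x; decide

theorem par_even {n : ℕ} [NeZero n] (hn2 : 2 ∣ n) (a : ZMod n) (d : ℤ) (hd : Even d) :
    (a + (d : ZMod n)).val % 2 = a.val % 2 := by
  have key : ∀ x : ZMod n, x.val % 2 = ((ZMod.castHom hn2 (ZMod 2)) x).val := by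
    intro x
    rw [ZMod.castHom_apply, ← ZMod.natCast_val, ZMod.val_natCast]
  rw [key, key, map_add, map_intCast]
  obtain ⟨k, hk⟩ := hd
  have h1 : ((d : ℤ) : ZMod 2) = 0 := by
    rw [hk]; push_cast; exact CharTwo.add_self_eq_zero _
  rw [h1, add_zero]

theorem intCast_zmod_ne_zero {n : ℕ} [NeZero n] (hn : 78 ≤ n) {k : ℤ} (hk : k ≠ 0)
    (hb : k.natAbs < 78) : (k : ZMod n) ≠ 0 := by
  intro h0
  rw [ZMod.intCast_zmod_eq_zero_iff_dvd] at h0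
  have h1 : (n : ℤ) ≤ |k| := Int.le_of_dvd (abs_pos.mpr hk) ((dvd_abs _ _).mpr h0)
  rcases abs_cases k with ⟨hc, _⟩ | ⟨hc, _⟩ <;> omega

theorem add_int_inj {n : ℕ} [NeZero n] (hn : 78 ≤ n) (v : ZMod n) {c c' : ℤ}
    (h : c ≠ c') (hb : (c - c').natAbs < 78) :
    v + (c : ZMod n) ≠ v + (c' : ZMod n) := by
  intro he
  have h0 : ((c - c' : ℤ) : ZMod n) = 0 := by
    push_cast
    rw [add_left_cancel he]
    ring
  exact intCast_zmod_ne_zero hn (sub_ne_zero.mpr h) hb h0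

theorem self_ne_add {n : ℕ} [NeZero n] (hn : 78 ≤ n) (v : ZMod n) {c : ℤ}
    (hc : c ≠ 0) (hb : c.natAbs < 78) : v ≠ v + (c : ZMod n) := by
  have h := add_int_inj hn v (c := 0) (c' := c) (Ne.symm hc) (by omega)
  rw [show v + ((0 : ℤ) : ZMod n) = v by push_cast; ring] at h
  exact h

theorem small_cases {n : ℕ} [NeZero n] (hn : 78 ≤ n) {s : ℤ} (hs : ((s : ZMod n)) = 0) :
    s = 0 ∨ 78 ≤ s ∨ s ≤ -78 := by
  rw [ZMod.intCast_zmod_eq_zero_iff_dvd] at hs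
  rcases eq_or_ne s 0 with h | h
  · exact Or.inl h
  · have h1 : (n : ℤ) ≤ |s| := Int.le_of_dvd (abs_pos.mpr h) ((dvd_abs _ _).mpr hs)
    rcases abs_cases s with ⟨hc, _⟩ | ⟨hc, _⟩ <;> omega

theorem step_fwd {n : ℕ} [NeZero n] (hn2 : 2 ∣ n) (k : ℤ) (ok : Odd k) {a b : ZMod n}
    (hk : b - a = (k : ZMod n)) : b = a + (k : ZMod n) ∧ b.val % 2 ≠ a.val % 2 := by
  have hb : b = a + (k : ZMod n) := by rw [← hk]; ring
  exact ⟨hb, by rw [hb]; exact par_odd hn2 a k ok⟩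

theorem step_bwd {n : ℕ} [NeZero n] (hn2 : 2 ∣ n) (k : ℤ) (ok : Odd k) {a b : ZMod n}
    (hk : a - b = (k : ZMod n)) : b = a + ((-k : ℤ) : ZMod n) ∧ b.val % 2 ≠ a.val % 2 := by
  have hb : b = a + ((-k : ℤ) : ZMod n) := by push_cast; rw [← hk]; ring
  exact ⟨hb, by rw [hb]; exact par_odd hn2 a (-k) ok.neg⟩

theorem adj_char {n : ℕ} [NeZero n] (hn2 : 2 ∣ n) (k1 k2 k3 k4 p q : ℤ)
    (o1 : Odd k1) (o2 : Odd k2) (o3 : Odd k3) (o4 : Odd k4) {a b : ZMod n}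
    (h : (SPQGraph n (p : ZMod n) (q : ZMod n)
      {(k1 : ZMod n), (k2 : ZMod n), (k3 : ZMod n), (k4 : ZMod n)}).Adj a b) :
    ∃ d : ℤ, b = a + (d : ZMod n) ∧
      ((a.val % 2 = 0 ∧ b.val % 2 ≠ a.val % 2 ∧ (d = k1 ∨ d = k2 ∨ d = k3 ∨ d = k4)) ∨
       (b.val % 2 = 0 ∧ b.val % 2 ≠ a.val % 2 ∧ (d = -k1 ∨ d = -k2 ∨ d = -k3 ∨ d = -k4)) ∨
       (a.val % 2 = 0 ∧ b.val % 2 = 0 ∧ (d = p ∨ d = -p)) ∨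
       (a.val % 2 = 1 ∧ b.val % 2 = 1 ∧ (d = q ∨ d = -q))) := by
  obtain ⟨hne, hcl⟩ := h
  rcases hcl with (⟨hev, hk⟩ | ⟨hev, hk⟩) | ⟨ha, hb, hpq⟩ | ⟨ha, hb, hpq⟩
  · rw [Nat.even_iff] at hev
    simp only [Set.mem_insert_iff, Set.mem_singleton_iff] at hk
    rcases hk with hk | hk | hk | hk
    · obtain ⟨h1, h2⟩ := step_fwd hn2 k1 o1 hk
      exact ⟨k1, h1, Or.inl ⟨hev, h2, Or.inl rfl⟩⟩
    · obtain ⟨h1, h2⟩ := step_fwd hn2 k2 o2 hk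
      exact ⟨k2, h1, Or.inl ⟨hev, h2, Or.inr (Or.inl rfl)⟩⟩
    · obtain ⟨h1, h2⟩ := step_fwd hn2 k3 o3 hk
      exact ⟨k3, h1, Or.inl ⟨hev, h2, Or.inr (Or.inr (Or.inl rfl))⟩⟩
    · obtain ⟨h1, h2⟩ := step_fwd hn2 k4 o4 hk
      exact ⟨k4, h1, Or.inl ⟨hev, h2, Or.inr (Or.inr (Or.inr rfl))⟩⟩
  · rw [Nat.even_iff] at hev
    simp only [Set.mem_insert_iff, Set.mem_singleton_iff] at hk
    rcases hk with hk | hk | hk | hk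
    · obtain ⟨h1, h2⟩ := step_bwd hn2 k1 o1 hk
      exact ⟨-k1, h1, Or.inr (Or.inl ⟨hev, h2, Or.inl rfl⟩)⟩
    · obtain ⟨h1, h2⟩ := step_bwd hn2 k2 o2 hk
      exact ⟨-k2, h1, Or.inr (Or.inl ⟨hev, h2, Or.inr (Or.inl rfl)⟩)⟩
    · obtain ⟨h1, h2⟩ := step_bwd hn2 k3 o3 hk
      exact ⟨-k3, h1, Or.inr (Or.inl ⟨hev, h2, Or.inr (Or.inr (Or.inl rfl))⟩)⟩
    · obtain ⟨h1, h2⟩ := step_bwd hn2 k4 o4 hk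
      exact ⟨-k4, h1, Or.inr (Or.inl ⟨hev, h2, Or.inr (Or.inr (Or.inr rfl))⟩)⟩
  · rw [Nat.even_iff] at ha hb
    rcases hpq with hk | hk
    · exact ⟨p, by rw [← hk]; ring, Or.inr (Or.inr (Or.inl ⟨ha, hb, Or.inl rfl⟩))⟩
    · exact ⟨-p, by push_cast; rw [← hk]; ring,
        Or.inr (Or.inr (Or.inl ⟨ha, hb, Or.inr rfl⟩))⟩
  · rw [Nat.odd_iff] at ha hb
    rcases hpq with hk | hk
    · exact ⟨q, by rw [← hk]; ring, Or.inr (Or.inr (Or.inr ⟨ha, hb, Or.inl rfl⟩))⟩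
    · exact ⟨-q, by push_cast; rw [← hk]; ring,
        Or.inr (Or.inr (Or.inr ⟨ha, hb, Or.inr rfl⟩))⟩

theorem egirth_ge_five {V : Type*} (G : SimpleGraph V)
    (h3 : ∀ a b c : V, G.Adj a b → G.Adj b c → G.Adj c a → False)
    (h4 : ∀ a b c d : V, G.Adj a b → G.Adj b c → G.Adj c d → G.Adj d a →
      a ≠ c → b ≠ d → False) :
    5 ≤ G.egirth := by
  rw [SimpleGraph.le_egirth]
  intro a w hw
  suffices h5 : 5 ≤ w.length by exact_mod_cast h5
  by_contra hlt
  push_neg at hlt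
  have hge := hw.three_le_length
  cases w with
  | nil => simp at hge
  | cons h1 w => cases w with
    | nil => simp at hge
    | cons h2 w => cases w with
      | nil => simp at hge
      | cons hh3 w => cases w with
        | nil => exact h3 _ _ _ h1 h2 hh3
        | cons hh4 w => cases w with
          | nil =>
            have hnd := hw.support_nodup
            simp [SimpleGraph.Walk.support_cons, List.nodup_cons] at hnd
            exact h4 _ _ _ _ h1 h2 hh3 hh4 (Ne.symm (by tauto)) (by tauto)
          | cons h5 w =>
            simp [SimpleGraph.Walk.length_cons] at hlt
            omega

theorem girth_generic {n : ℕ} [NeZero n] (hn2 : 2 ∣ n) (hn : 78 ≤ n)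
    (k1 k2 k3 k4 p q : ℤ)
    (o1 : Odd k1) (o2 : Odd k2) (o3 : Odd k3) (o4 : Odd k4)
    (H3 : ∀ d1 d2 d3 : ℤ, ∀ pa pb pc : ℕ,
      ((pa = 0 ∧ pb ≠ pa ∧ (d1 = k1 ∨ d1 = k2 ∨ d1 = k3 ∨ d1 = k4)) ∨
       (pb = 0 ∧ pb ≠ pa ∧ (d1 = -k1 ∨ d1 = -k2 ∨ d1 = -k3 ∨ d1 = -k4)) ∨
       (pa = 0 ∧ pb = 0 ∧ (d1 = p ∨ d1 = -p)) ∨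
       (pa = 1 ∧ pb = 1 ∧ (d1 = q ∨ d1 = -q))) →
      ((pb = 0 ∧ pc ≠ pb ∧ (d2 = k1 ∨ d2 = k2 ∨ d2 = k3 ∨ d2 = k4)) ∨
       (pc = 0 ∧ pc ≠ pb ∧ (d2 = -k1 ∨ d2 = -k2 ∨ d2 = -k3 ∨ d2 = -k4)) ∨
       (pb = 0 ∧ pc = 0 ∧ (d2 = p ∨ d2 = -p)) ∨
       (pb = 1 ∧ pc = 1 ∧ (d2 = q ∨ d2 = -q))) →
      ((pc = 0 ∧ pa ≠ pc ∧ (d3 = k1 ∨ d3 = k2 ∨ d3 = k3 ∨ d3 = k4)) ∨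
       (pa = 0 ∧ pa ≠ pc ∧ (d3 = -k1 ∨ d3 = -k2 ∨ d3 = -k3 ∨ d3 = -k4)) ∨
       (pc = 0 ∧ pa = 0 ∧ (d3 = p ∨ d3 = -p)) ∨
       (pc = 1 ∧ pa = 1 ∧ (d3 = q ∨ d3 = -q))) →
      (d1 + d2 + d3 = 0 ∨ 78 ≤ d1 + d2 + d3 ∨ d1 + d2 + d3 ≤ -78) → False)
    (H4 : ∀ d1 d2 d3 d4 : ℤ, ∀ pa pb pc pd : ℕ,
      ((pa = 0 ∧ pb ≠ pa ∧ (d1 = k1 ∨ d1 = k2 ∨ d1 = k3 ∨ d1 = k4)) ∨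
       (pb = 0 ∧ pb ≠ pa ∧ (d1 = -k1 ∨ d1 = -k2 ∨ d1 = -k3 ∨ d1 = -k4)) ∨
       (pa = 0 ∧ pb = 0 ∧ (d1 = p ∨ d1 = -p)) ∨
       (pa = 1 ∧ pb = 1 ∧ (d1 = q ∨ d1 = -q))) →
      ((pb = 0 ∧ pc ≠ pb ∧ (d2 = k1 ∨ d2 = k2 ∨ d2 = k3 ∨ d2 = k4)) ∨
       (pc = 0 ∧ pc ≠ pb ∧ (d2 = -k1 ∨ d2 = -k2 ∨ d2 = -k3 ∨ d2 = -k4)) ∨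
       (pb = 0 ∧ pc = 0 ∧ (d2 = p ∨ d2 = -p)) ∨
       (pb = 1 ∧ pc = 1 ∧ (d2 = q ∨ d2 = -q))) →
      ((pc = 0 ∧ pd ≠ pc ∧ (d3 = k1 ∨ d3 = k2 ∨ d3 = k3 ∨ d3 = k4)) ∨
       (pd = 0 ∧ pd ≠ pc ∧ (d3 = -k1 ∨ d3 = -k2 ∨ d3 = -k3 ∨ d3 = -k4)) ∨
       (pc = 0 ∧ pd = 0 ∧ (d3 = p ∨ d3 = -p)) ∨
       (pc = 1 ∧ pd = 1 ∧ (d3 = q ∨ d3 = -q))) →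
      ((pd = 0 ∧ pa ≠ pd ∧ (d4 = k1 ∨ d4 = k2 ∨ d4 = k3 ∨ d4 = k4)) ∨
       (pa = 0 ∧ pa ≠ pd ∧ (d4 = -k1 ∨ d4 = -k2 ∨ d4 = -k3 ∨ d4 = -k4)) ∨
       (pd = 0 ∧ pa = 0 ∧ (d4 = p ∨ d4 = -p)) ∨
       (pd = 1 ∧ pa = 1 ∧ (d4 = q ∨ d4 = -q))) →
      d1 + d2 ≠ 0 → d2 + d3 ≠ 0 →
      (d1 + d2 + d3 + d4 = 0 ∨ 78 ≤ d1 + d2 + d3 + d4 ∨ d1 + d2 + d3 + d4 ≤ -78) →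
      False) :
    5 ≤ (SPQGraph n (p : ZMod n) (q : ZMod n)
      {(k1 : ZMod n), (k2 : ZMod n), (k3 : ZMod n), (k4 : ZMod n)}).egirth := by
  apply egirth_ge_five
  · intro a b c hab hbc hca
    obtain ⟨d1, e1, m1⟩ := adj_char hn2 k1 k2 k3 k4 p q o1 o2 o3 o4 hab
    obtain ⟨d2, e2, m2⟩ := adj_char hn2 k1 k2 k3 k4 p q o1 o2 o3 o4 hbc
    obtain ⟨d3, e3, m3⟩ := adj_char hn2 k1 k2 k3 k4 p q o1 o2 o3 o4 hca
    have hsum : ((d1 + d2 + d3 : ℤ) : ZMod n) = 0 := by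
      have h := e3
      rw [e2, e1] at h
      push_cast
      linear_combination -h
    exact H3 d1 d2 d3 _ _ _ m1 m2 m3 (small_cases hn hsum)
  · intro a b c d hab hbc hcd hda hac hbd
    obtain ⟨d1, e1, m1⟩ := adj_char hn2 k1 k2 k3 k4 p q o1 o2 o3 o4 hab
    obtain ⟨d2, e2, m2⟩ := adj_char hn2 k1 k2 k3 k4 p q o1 o2 o3 o4 hbc
    obtain ⟨d3, e3, m3⟩ := adj_char hn2 k1 k2 k3 k4 p q o1 o2 o3 o4 hcd
    obtain ⟨d4, e4, m4⟩ := adj_char hn2 k1 k2 k3 k4 p q o1 o2 o3 o4 hda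
    have hsum : ((d1 + d2 + d3 + d4 : ℤ) : ZMod n) = 0 := by
      have h := e4
      rw [e3, e2, e1] at h
      push_cast
      linear_combination -h
    have h12 : d1 + d2 ≠ 0 := by
      intro h0
      apply hac
      have hc : c = a + ((d1 + d2 : ℤ) : ZMod n) := by
        rw [e2, e1]; push_cast; ring
      rw [h0] at hc
      simpa using hc.symm
    have h23 : d2 + d3 ≠ 0 := by
      intro h0
      apply hbd
      have hd : d = b + ((d2 + d3 : ℤ) : ZMod n) := by
        rw [e3, e2]; push_cast; ring
      rw [h0] at hd
      simpa using hd.symm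
    exact H4 d1 d2 d3 d4 _ _ _ _ m1 m2 m3 m4 h12 h23 (small_cases hn hsum)

theorem ncard_six {n : ℕ} [NeZero n] (hn : 78 ≤ n) (v : ZMod n) (c1 c2 c3 c4 c5 c6 : ℤ)
    (h : ([c1, c2, c3, c4, c5, c6] : List ℤ).Nodup)
    (b1 : c1.natAbs ≤ 38) (b2 : c2.natAbs ≤ 38) (b3 : c3.natAbs ≤ 38)
    (b4 : c4.natAbs ≤ 38) (b5 : c5.natAbs ≤ 38) (b6 : c6.natAbs ≤ 38) :
    ({v + (c1 : ZMod n), v + (c2 : ZMod n), v + (c3 : ZMod n), v + (c4 : ZMod n),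
      v + (c5 : ZMod n), v + (c6 : ZMod n)} : Set (ZMod n)).ncard = 6 := by
  simp only [List.nodup_cons, List.mem_cons, List.not_mem_nil, or_false, not_or,
    List.nodup_nil, and_true, List.mem_singleton] at h
  obtain ⟨⟨a12, a13, a14, a15, a16⟩, ⟨a23, a24, a25, a26⟩, ⟨a34, a35, a36⟩, ⟨a45, a46⟩,
    a56, -⟩ := h
  have ne : ∀ c c' : ℤ, c.natAbs ≤ 38 → c'.natAbs ≤ 38 → c ≠ c' →
      v + (c : ZMod n) ≠ v + (c' : ZMod n) := by
    intro c c' hc hc' hne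
    exact add_int_inj hn v hne (by omega)
  rw [Set.ncard_insert_of_notMem, Set.ncard_insert_of_notMem,
    Set.ncard_insert_of_notMem, Set.ncard_insert_of_notMem,
    Set.ncard_insert_of_notMem, Set.ncard_singleton]
  · simp only [Set.mem_singleton_iff]
    exact ne c5 c6 b5 b6 a56
  · simp only [Set.mem_insert_iff, Set.mem_singleton_iff, not_or]
    exact ⟨ne c4 c5 b4 b5 a45, ne c4 c6 b4 b6 a46⟩
  · simp only [Set.mem_insert_iff, Set.mem_singleton_iff, not_or]
    exact ⟨ne c3 c4 b3 b4 a34, ne c3 c5 b3 b5 a35, ne c3 c6 b3 b6 a36⟩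
  · simp only [Set.mem_insert_iff, Set.mem_singleton_iff, not_or]
    exact ⟨ne c2 c3 b2 b3 a23, ne c2 c4 b2 b4 a24, ne c2 c5 b2 b5 a25, ne c2 c6 b2 b6 a26⟩
  · simp only [Set.mem_insert_iff, Set.mem_singleton_iff, not_or]
    exact ⟨ne c1 c2 b1 b2 a12, ne c1 c3 b1 b3 a13, ne c1 c4 b1 b4 a14, ne c1 c5 b1 b5 a15,
      ne c1 c6 b1 b6 a16⟩

theorem nbhd_even {n : ℕ} [NeZero n] (hn2 : 2 ∣ n) (hn : 78 ≤ n) (k1 k2 k3 k4 p q : ℤ)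
    (o1 : Odd k1) (o2 : Odd k2) (o3 : Odd k3) (o4 : Odd k4) (hpe : Even p) (hp0 : p ≠ 0)
    (b1 : k1.natAbs ≤ 38) (b2 : k2.natAbs ≤ 38) (b3 : k3.natAbs ≤ 38) (b4 : k4.natAbs ≤ 38)
    (bp : p.natAbs ≤ 38) (v : ZMod n) (hv : v.val % 2 = 0) :
    (SPQGraph n (p : ZMod n) (q : ZMod n)
      {(k1 : ZMod n), (k2 : ZMod n), (k3 : ZMod n), (k4 : ZMod n)}).neighborSet v =
    {v + (k1 : ZMod n), v + (k2 : ZMod n), v + (k3 : ZMod n), v + (k4 : ZMod n),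
      v + (p : ZMod n), v + ((-p : ℤ) : ZMod n)} := by
  have knz : ∀ k : ℤ, Odd k → k ≠ 0 := by
    intro k hk h0
    obtain ⟨m, hm⟩ := hk
    omega
  ext b
  simp only [SimpleGraph.mem_neighborSet, Set.mem_insert_iff, Set.mem_singleton_iff]
  constructor
  · intro h
    obtain ⟨d, hbd, hm⟩ := adj_char hn2 k1 k2 k3 k4 p q o1 o2 o3 o4 h
    rcases hm with ⟨h0, hne, hd⟩ | ⟨h0, hne, hd⟩ | ⟨h0, h0', hd⟩ | ⟨h0, h0', hd⟩
    · rcases hd with rfl | rfl | rfl | rfl <;> tauto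
    · exact absurd h0 (by omega)
    · rcases hd with rfl | rfl <;> tauto
    · exact absurd hv (by omega)
  · have hev : Even v.val := Nat.even_iff.mpr hv
    rintro (rfl | rfl | rfl | rfl | rfl | rfl)
    · refine ⟨self_ne_add hn v (knz k1 o1) (by omega), Or.inl (Or.inl ⟨hev, ?_⟩)⟩
      rw [show v + (k1 : ZMod n) - v = (k1 : ZMod n) by ring]
      simp
    · refine ⟨self_ne_add hn v (knz k2 o2) (by omega), Or.inl (Or.inl ⟨hev, ?_⟩)⟩
      rw [show v + (k2 : ZMod n) - v = (k2 : ZMod n) by ring]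
      simp
    · refine ⟨self_ne_add hn v (knz k3 o3) (by omega), Or.inl (Or.inl ⟨hev, ?_⟩)⟩
      rw [show v + (k3 : ZMod n) - v = (k3 : ZMod n) by ring]
      simp
    · refine ⟨self_ne_add hn v (knz k4 o4) (by omega), Or.inl (Or.inl ⟨hev, ?_⟩)⟩
      rw [show v + (k4 : ZMod n) - v = (k4 : ZMod n) by ring]
      simp
    · refine ⟨self_ne_add hn v hp0 (by omega), Or.inr (Or.inl ⟨hev, ?_, Or.inl ?_⟩)⟩
      · exact Nat.even_iff.mpr (by rw [par_even hn2 v p hpe]; exact hv)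
      · ring
    · refine ⟨self_ne_add hn v (by omega : (-p : ℤ) ≠ 0) (by omega),
        Or.inr (Or.inl ⟨hev, ?_, Or.inr ?_⟩)⟩
      · exact Nat.even_iff.mpr (by rw [par_even hn2 v (-p) hpe.neg]; exact hv)
      · push_cast
        ring

theorem nbhd_odd {n : ℕ} [NeZero n] (hn2 : 2 ∣ n) (hn : 78 ≤ n) (k1 k2 k3 k4 p q : ℤ)
    (o1 : Odd k1) (o2 : Odd k2) (o3 : Odd k3) (o4 : Odd k4) (hqe : Even q) (hq0 : q ≠ 0)
    (b1 : k1.natAbs ≤ 38) (b2 : k2.natAbs ≤ 38) (b3 : k3.natAbs ≤ 38) (b4 : k4.natAbs ≤ 38)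
    (bq : q.natAbs ≤ 38) (v : ZMod n) (hv : v.val % 2 = 1) :
    (SPQGraph n (p : ZMod n) (q : ZMod n)
      {(k1 : ZMod n), (k2 : ZMod n), (k3 : ZMod n), (k4 : ZMod n)}).neighborSet v =
    {v + ((-k1 : ℤ) : ZMod n), v + ((-k2 : ℤ) : ZMod n), v + ((-k3 : ℤ) : ZMod n),
      v + ((-k4 : ℤ) : ZMod n), v + (q : ZMod n), v + ((-q : ℤ) : ZMod n)} := by
  have knz : ∀ k : ℤ, Odd k → (-k : ℤ) ≠ 0 := by
    intro k hk h0
    obtain ⟨m, hm⟩ := hk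
    omega
  have hodd : Odd v.val := Nat.odd_iff.mpr hv
  ext b
  simp only [SimpleGraph.mem_neighborSet, Set.mem_insert_iff, Set.mem_singleton_iff]
  constructor
  · intro h
    obtain ⟨d, hbd, hm⟩ := adj_char hn2 k1 k2 k3 k4 p q o1 o2 o3 o4 h
    rcases hm with ⟨h0, hne, hd⟩ | ⟨h0, hne, hd⟩ | ⟨h0, h0', hd⟩ | ⟨h0, h0', hd⟩
    · exact absurd hv (by omega)
    · rcases hd with rfl | rfl | rfl | rfl <;> tauto
    · exact absurd hv (by omega)
    · rcases hd with rfl | rfl <;> tauto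
  · rintro (rfl | rfl | rfl | rfl | rfl | rfl)
    · refine ⟨self_ne_add hn v (knz k1 o1) (by omega), Or.inl (Or.inr ⟨?_, ?_⟩)⟩
      · have := par_odd hn2 v (-k1) o1.neg
        exact Nat.even_iff.mpr (by omega)
      · rw [show v - (v + ((-k1 : ℤ) : ZMod n)) = (k1 : ZMod n) by push_cast; ring]
        simp
    · refine ⟨self_ne_add hn v (knz k2 o2) (by omega), Or.inl (Or.inr ⟨?_, ?_⟩)⟩
      · have := par_odd hn2 v (-k2) o2.neg
        exact Nat.even_iff.mpr (by omega)
      · rw [show v - (v + ((-k2 : ℤ) : ZMod n)) = (k2 : ZMod n) by push_cast; ring]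
        simp
    · refine ⟨self_ne_add hn v (knz k3 o3) (by omega), Or.inl (Or.inr ⟨?_, ?_⟩)⟩
      · have := par_odd hn2 v (-k3) o3.neg
        exact Nat.even_iff.mpr (by omega)
      · rw [show v - (v + ((-k3 : ℤ) : ZMod n)) = (k3 : ZMod n) by push_cast; ring]
        simp
    · refine ⟨self_ne_add hn v (knz k4 o4) (by omega), Or.inl (Or.inr ⟨?_, ?_⟩)⟩
      · have := par_odd hn2 v (-k4) o4.neg
        exact Nat.even_iff.mpr (by omega)
      · rw [show v - (v + ((-k4 : ℤ) : ZMod n)) = (k4 : ZMod n) by push_cast; ring]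
        simp
    · refine ⟨self_ne_add hn v hq0 (by omega),
        Or.inr (Or.inr ⟨hodd, ?_, Or.inl (by ring)⟩)⟩
      exact Nat.odd_iff.mpr (by rw [par_even hn2 v q hqe]; exact hv)
    · refine ⟨self_ne_add hn v (by omega : (-q : ℤ) ≠ 0) (by omega),
        Or.inr (Or.inr ⟨hodd, ?_, Or.inr (by push_cast; ring)⟩)⟩
      exact Nat.odd_iff.mpr (by rw [par_even hn2 v (-q) hqe.neg]; exact hv)

theorem deg_six {n : ℕ} [NeZero n] (hn2 : 2 ∣ n) (hn : 78 ≤ n) (k1 k2 k3 k4 p q : ℤ)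
    (o1 : Odd k1) (o2 : Odd k2) (o3 : Odd k3) (o4 : Odd k4)
    (hpe : Even p) (hqe : Even q) (hp0 : p ≠ 0) (hq0 : q ≠ 0)
    (b1 : k1.natAbs ≤ 38) (b2 : k2.natAbs ≤ 38) (b3 : k3.natAbs ≤ 38) (b4 : k4.natAbs ≤ 38)
    (bp : p.natAbs ≤ 38) (bq : q.natAbs ≤ 38)
    (nd1 : ([k1, k2, k3, k4, p, -p] : List ℤ).Nodup)
    (nd2 : ([-k1, -k2, -k3, -k4, q, -q] : List ℤ).Nodup)
    (v : ZMod n) :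
    ((SPQGraph n (p : ZMod n) (q : ZMod n)
      {(k1 : ZMod n), (k2 : ZMod n), (k3 : ZMod n), (k4 : ZMod n)}).neighborSet v).ncard
      = 6 := by
  rcases Nat.mod_two_eq_zero_or_one v.val with hv | hv
  · rw [nbhd_even hn2 hn k1 k2 k3 k4 p q o1 o2 o3 o4 hpe hp0 b1 b2 b3 b4 bp v hv]
    exact ncard_six hn v k1 k2 k3 k4 p (-p) nd1 b1 b2 b3 b4 bp (by omega)
  · rw [nbhd_odd hn2 hn k1 k2 k3 k4 p q o1 o2 o3 o4 hqe hq0 b1 b2 b3 b4 bq v hv]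
    exact ncard_six hn v (-k1) (-k2) (-k3) (-k4) q (-q) nd2 (by omega) (by omega)
      (by omega) (by omega) bq (by omega)

set_option maxHeartbeats 2000000 in
theorem H3_G0 : ∀ d1 d2 d3 : ℤ, ∀ pa pb pc : ℕ,
      ((pa = 0 ∧ pb ≠ pa ∧ (d1 = 1 ∨ d1 = -1 ∨ d1 = 5 ∨ d1 = -13)) ∨
       (pb = 0 ∧ pb ≠ pa ∧ (d1 = -1 ∨ d1 = -(-1) ∨ d1 = -5 ∨ d1 = -(-13))) ∨
       (pa = 0 ∧ pb = 0 ∧ (d1 = 8 ∨ d1 = -8)) ∨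
       (pa = 1 ∧ pb = 1 ∧ (d1 = 16 ∨ d1 = -16))) →
      ((pb = 0 ∧ pc ≠ pb ∧ (d2 = 1 ∨ d2 = -1 ∨ d2 = 5 ∨ d2 = -13)) ∨
       (pc = 0 ∧ pc ≠ pb ∧ (d2 = -1 ∨ d2 = -(-1) ∨ d2 = -5 ∨ d2 = -(-13))) ∨
       (pb = 0 ∧ pc = 0 ∧ (d2 = 8 ∨ d2 = -8)) ∨
       (pb = 1 ∧ pc = 1 ∧ (d2 = 16 ∨ d2 = -16))) →
      ((pc = 0 ∧ pa ≠ pc ∧ (d3 = 1 ∨ d3 = -1 ∨ d3 = 5 ∨ d3 = -13)) ∨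
       (pa = 0 ∧ pa ≠ pc ∧ (d3 = -1 ∨ d3 = -(-1) ∨ d3 = -5 ∨ d3 = -(-13))) ∨
       (pc = 0 ∧ pa = 0 ∧ (d3 = 8 ∨ d3 = -8)) ∨
       (pc = 1 ∧ pa = 1 ∧ (d3 = 16 ∨ d3 = -16))) →
      (d1 + d2 + d3 = 0 ∨ 78 ≤ d1 + d2 + d3 ∨ d1 + d2 + d3 ≤ -78) → False := by
  intro d1 d2 d3 pa pb pc m1 m2 m3 hs
  omega

set_option maxHeartbeats 4000000 in
theorem H4_G0 : ∀ d1 d2 d3 d4 : ℤ, ∀ pa pb pc pd : ℕ,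
      ((pa = 0 ∧ pb ≠ pa ∧ (d1 = 1 ∨ d1 = -1 ∨ d1 = 5 ∨ d1 = -13)) ∨
       (pb = 0 ∧ pb ≠ pa ∧ (d1 = -1 ∨ d1 = -(-1) ∨ d1 = -5 ∨ d1 = -(-13))) ∨
       (pa = 0 ∧ pb = 0 ∧ (d1 = 8 ∨ d1 = -8)) ∨
       (pa = 1 ∧ pb = 1 ∧ (d1 = 16 ∨ d1 = -16))) →
      ((pb = 0 ∧ pc ≠ pb ∧ (d2 = 1 ∨ d2 = -1 ∨ d2 = 5 ∨ d2 = -13)) ∨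
       (pc = 0 ∧ pc ≠ pb ∧ (d2 = -1 ∨ d2 = -(-1) ∨ d2 = -5 ∨ d2 = -(-13))) ∨
       (pb = 0 ∧ pc = 0 ∧ (d2 = 8 ∨ d2 = -8)) ∨
       (pb = 1 ∧ pc = 1 ∧ (d2 = 16 ∨ d2 = -16))) →
      ((pc = 0 ∧ pd ≠ pc ∧ (d3 = 1 ∨ d3 = -1 ∨ d3 = 5 ∨ d3 = -13)) ∨
       (pd = 0 ∧ pd ≠ pc ∧ (d3 = -1 ∨ d3 = -(-1) ∨ d3 = -5 ∨ d3 = -(-13))) ∨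
       (pc = 0 ∧ pd = 0 ∧ (d3 = 8 ∨ d3 = -8)) ∨
       (pc = 1 ∧ pd = 1 ∧ (d3 = 16 ∨ d3 = -16))) →
      ((pd = 0 ∧ pa ≠ pd ∧ (d4 = 1 ∨ d4 = -1 ∨ d4 = 5 ∨ d4 = -13)) ∨
       (pa = 0 ∧ pa ≠ pd ∧ (d4 = -1 ∨ d4 = -(-1) ∨ d4 = -5 ∨ d4 = -(-13))) ∨
       (pd = 0 ∧ pa = 0 ∧ (d4 = 8 ∨ d4 = -8)) ∨
       (pd = 1 ∧ pa = 1 ∧ (d4 = 16 ∨ d4 = -16))) →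
      d1 + d2 ≠ 0 → d2 + d3 ≠ 0 →
      (d1 + d2 + d3 + d4 = 0 ∨ 78 ≤ d1 + d2 + d3 + d4 ∨ d1 + d2 + d3 + d4 ≤ -78) →
      False := by
  intro d1 d2 d3 d4 pa pb pc pd m1 m2 m3 m4 h12 h23 hs
  rcases m1 with ⟨e1, e2, m1⟩ | ⟨e1, e2, m1⟩ | ⟨e1, e2, m1⟩ | ⟨e1, e2, m1⟩ <;>
    rcases m2 with ⟨f1, f2, m2⟩ | ⟨f1, f2, m2⟩ | ⟨f1, f2, m2⟩ | ⟨f1, f2, m2⟩ <;>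
    rcases m3 with ⟨g1, g2, m3⟩ | ⟨g1, g2, m3⟩ | ⟨g1, g2, m3⟩ | ⟨g1, g2, m3⟩ <;>
    rcases m4 with ⟨i1, i2, m4⟩ | ⟨i1, i2, m4⟩ | ⟨i1, i2, m4⟩ | ⟨i1, i2, m4⟩ <;>
    omega

set_option maxHeartbeats 2000000 in
theorem H3_G1 : ∀ d1 d2 d3 : ℤ, ∀ pa pb pc : ℕ,
      ((pa = 0 ∧ pb ≠ pa ∧ (d1 = 3 ∨ d1 = -7 ∨ d1 = 15 ∨ d1 = -21)) ∨
       (pb = 0 ∧ pb ≠ pa ∧ (d1 = -3 ∨ d1 = -(-7) ∨ d1 = -15 ∨ d1 = -(-21))) ∨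
       (pa = 0 ∧ pb = 0 ∧ (d1 = 2 ∨ d1 = -2)) ∨
       (pa = 1 ∧ pb = 1 ∧ (d1 = 4 ∨ d1 = -4))) →
      ((pb = 0 ∧ pc ≠ pb ∧ (d2 = 3 ∨ d2 = -7 ∨ d2 = 15 ∨ d2 = -21)) ∨
       (pc = 0 ∧ pc ≠ pb ∧ (d2 = -3 ∨ d2 = -(-7) ∨ d2 = -15 ∨ d2 = -(-21))) ∨
       (pb = 0 ∧ pc = 0 ∧ (d2 = 2 ∨ d2 = -2)) ∨
       (pb = 1 ∧ pc = 1 ∧ (d2 = 4 ∨ d2 = -4))) →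
      ((pc = 0 ∧ pa ≠ pc ∧ (d3 = 3 ∨ d3 = -7 ∨ d3 = 15 ∨ d3 = -21)) ∨
       (pa = 0 ∧ pa ≠ pc ∧ (d3 = -3 ∨ d3 = -(-7) ∨ d3 = -15 ∨ d3 = -(-21))) ∨
       (pc = 0 ∧ pa = 0 ∧ (d3 = 2 ∨ d3 = -2)) ∨
       (pc = 1 ∧ pa = 1 ∧ (d3 = 4 ∨ d3 = -4))) →
      (d1 + d2 + d3 = 0 ∨ 78 ≤ d1 + d2 + d3 ∨ d1 + d2 + d3 ≤ -78) → False := by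
  intro d1 d2 d3 pa pb pc m1 m2 m3 hs
  omega

set_option maxHeartbeats 4000000 in
theorem H4_G1 : ∀ d1 d2 d3 d4 : ℤ, ∀ pa pb pc pd : ℕ,
      ((pa = 0 ∧ pb ≠ pa ∧ (d1 = 3 ∨ d1 = -7 ∨ d1 = 15 ∨ d1 = -21)) ∨
       (pb = 0 ∧ pb ≠ pa ∧ (d1 = -3 ∨ d1 = -(-7) ∨ d1 = -15 ∨ d1 = -(-21))) ∨
       (pa = 0 ∧ pb = 0 ∧ (d1 = 2 ∨ d1 = -2)) ∨
       (pa = 1 ∧ pb = 1 ∧ (d1 = 4 ∨ d1 = -4))) →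
      ((pb = 0 ∧ pc ≠ pb ∧ (d2 = 3 ∨ d2 = -7 ∨ d2 = 15 ∨ d2 = -21)) ∨
       (pc = 0 ∧ pc ≠ pb ∧ (d2 = -3 ∨ d2 = -(-7) ∨ d2 = -15 ∨ d2 = -(-21))) ∨
       (pb = 0 ∧ pc = 0 ∧ (d2 = 2 ∨ d2 = -2)) ∨
       (pb = 1 ∧ pc = 1 ∧ (d2 = 4 ∨ d2 = -4))) →
      ((pc = 0 ∧ pd ≠ pc ∧ (d3 = 3 ∨ d3 = -7 ∨ d3 = 15 ∨ d3 = -21)) ∨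
       (pd = 0 ∧ pd ≠ pc ∧ (d3 = -3 ∨ d3 = -(-7) ∨ d3 = -15 ∨ d3 = -(-21))) ∨
       (pc = 0 ∧ pd = 0 ∧ (d3 = 2 ∨ d3 = -2)) ∨
       (pc = 1 ∧ pd = 1 ∧ (d3 = 4 ∨ d3 = -4))) →
      ((pd = 0 ∧ pa ≠ pd ∧ (d4 = 3 ∨ d4 = -7 ∨ d4 = 15 ∨ d4 = -21)) ∨
       (pa = 0 ∧ pa ≠ pd ∧ (d4 = -3 ∨ d4 = -(-7) ∨ d4 = -15 ∨ d4 = -(-21))) ∨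
       (pd = 0 ∧ pa = 0 ∧ (d4 = 2 ∨ d4 = -2)) ∨
       (pd = 1 ∧ pa = 1 ∧ (d4 = 4 ∨ d4 = -4))) →
      d1 + d2 ≠ 0 → d2 + d3 ≠ 0 →
      (d1 + d2 + d3 + d4 = 0 ∨ 78 ≤ d1 + d2 + d3 + d4 ∨ d1 + d2 + d3 + d4 ≤ -78) →
      False := by
  intro d1 d2 d3 d4 pa pb pc pd m1 m2 m3 m4 h12 h23 hs
  rcases m1 with ⟨e1, e2, m1⟩ | ⟨e1, e2, m1⟩ | ⟨e1, e2, m1⟩ | ⟨e1, e2, m1⟩ <;>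
    rcases m2 with ⟨f1, f2, m2⟩ | ⟨f1, f2, m2⟩ | ⟨f1, f2, m2⟩ | ⟨f1, f2, m2⟩ <;>
    rcases m3 with ⟨g1, g2, m3⟩ | ⟨g1, g2, m3⟩ | ⟨g1, g2, m3⟩ | ⟨g1, g2, m3⟩ <;>
    rcases m4 with ⟨i1, i2, m4⟩ | ⟨i1, i2, m4⟩ | ⟨i1, i2, m4⟩ | ⟨i1, i2, m4⟩ <;>
    omega

theorem G0_facts {n : ℕ} [NeZero n] (hn2 : 2 ∣ n) (hn : 78 ≤ n) :
    (∀ v : ZMod n,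
        ((SPQGraph n 8 16 ({1, -1, 5, -13} : Set (ZMod n))).neighborSet v).ncard = 6) ∧
      5 ≤ (SPQGraph n 8 16 ({1, -1, 5, -13} : Set (ZMod n))).egirth := by
  have hG : SPQGraph n 8 16 ({1, -1, 5, -13} : Set (ZMod n))
      = SPQGraph n ((8 : ℤ) : ZMod n) ((16 : ℤ) : ZMod n)
        {((1 : ℤ) : ZMod n), ((-1 : ℤ) : ZMod n), ((5 : ℤ) : ZMod n),
          ((-13 : ℤ) : ZMod n)} := by
    norm_num
  rw [hG]
  constructor
  · intro v
    exact deg_six hn2 hn 1 (-1) 5 (-13) 8 16 (by decide) (by decide) (by decide) (by decide)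
      (by decide) (by decide) (by decide) (by decide) (by decide) (by decide) (by decide)
      (by decide) (by decide) (by decide) (by decide) (by decide) v
  · exact girth_generic hn2 hn 1 (-1) 5 (-13) 8 16 (by decide) (by decide) (by decide)
      (by decide) H3_G0 H4_G0

theorem G1_facts {n : ℕ} [NeZero n] (hn2 : 2 ∣ n) (hn : 78 ≤ n) :
    (∀ v : ZMod n,
        ((SPQGraph n 2 4 ({3, -7, 15, -21} : Set (ZMod n))).neighborSet v).ncard = 6) ∧
      5 ≤ (SPQGraph n 2 4 ({3, -7, 15, -21} : Set (ZMod n))).egirth := by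
  have hG : SPQGraph n 2 4 ({3, -7, 15, -21} : Set (ZMod n))
      = SPQGraph n ((2 : ℤ) : ZMod n) ((4 : ℤ) : ZMod n)
        {((3 : ℤ) : ZMod n), ((-7 : ℤ) : ZMod n), ((15 : ℤ) : ZMod n),
          ((-21 : ℤ) : ZMod n)} := by
    norm_num
  rw [hG]
  constructor
  · intro v
    exact deg_six hn2 hn 3 (-7) 15 (-21) 2 4 (by decide) (by decide) (by decide) (by decide)
      (by decide) (by decide) (by decide) (by decide) (by decide) (by decide) (by decide)
      (by decide) (by decide) (by decide) (by decide) (by decide) v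
  · exact girth_generic hn2 hn 3 (-7) 15 (-21) 2 4 (by decide) (by decide) (by decide)
      (by decide) H3_G1 H4_G1

/-- For every odd prime power q ≥ 79, the graphs G₀ = S_{q−1}(8,16; 1,−1,5,−13)
and G₁ = S_{q−1}(2,4; 3,−7,15,−21) on Z_{q−1} are both 6-regular of girth at
least 5. -/
theorem stmt15 (q : ℕ) (hq : 79 ≤ q) (hqodd : Odd q) (hpp : IsPrimePow q) :
    ((∀ v : ZMod (q - 1),
        ((SPQGraph (q - 1) 8 16
          ({1, -1, 5, -13} : Set (ZMod (q - 1)))).neighborSet v).ncard = 6) ∧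
      5 ≤ (SPQGraph (q - 1) 8 16 ({1, -1, 5, -13} : Set (ZMod (q - 1)))).egirth) ∧
    ((∀ v : ZMod (q - 1),
        ((SPQGraph (q - 1) 2 4
          ({3, -7, 15, -21} : Set (ZMod (q - 1)))).neighborSet v).ncard = 6) ∧
      5 ≤ (SPQGraph (q - 1) 2 4 ({3, -7, 15, -21} : Set (ZMod (q - 1)))).egirth) := by
  haveI : NeZero (q - 1) := ⟨by omega⟩
  have hn : 78 ≤ q - 1 := by omega
  have hn2 : 2 ∣ (q - 1) := by
    obtain ⟨k, hk⟩ := hqodd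
    omega
  exact ⟨G0_facts hn2 hn, G1_facts hn2 hn⟩
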